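/- For monomial ideals K_{t,i} of R = A[ℝ≥0^d] (1 ≤ t ≤ l, 1 ≤ i ≤ m_t), the sum over t of the intersections ⋂_{i_t} K_{t,i_t} equals the intersection over all tuples (i_1,…,i_l) of the sums ∑_t K_{t,i_t}. -/

import Mathlib

open scoped NNReal ENNReal

/-- The semigroup ring `R = A[ℝ≥0 ^ d]`. -/
abbrev SemiRng (A : Type*) [CommRing A] (d : ℕ) : Type _ :=
  AddMonoidAlgebra A (Fin d → ℝ≥0)

/-- The monomial `X^r` of `A[ℝ≥0 ^ d]`. -/
noncomputable def mono (A : Type*) [CommRing A] {d : ℕ} (r : Fin d → ℝ≥0) : SemiRng A d :=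
  AddMonoidAlgebra.single r 1

/-- An ideal of `A[ℝ≥0 ^ d]` is a monomial ideal if it is generated by a set of monomials. -/
def IsMonomialIdeal {A : Type*} [CommRing A] {d : ℕ} (I : Ideal (SemiRng A d)) : Prop :=
  ∃ E : Set (Fin d → ℝ≥0), I = Ideal.span (mono A '' E)

/-- The set of (exponent vectors of) monomials contained in an ideal. -/
def monSet (A : Type*) [CommRing A] {d : ℕ} (I : Ideal (SemiRng A d)) :
    Set (Fin d → ℝ≥0) :=
  {r | mono A r ∈ I}

/-- `geq e r a` means `r ≥_e a`: `r ≥ a` if `e = 0` (false), `r > a` if `e = 1` (true);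
no finite `r` satisfies `r ≥_e ∞`. -/
def geq (e : Bool) (r : ℝ≥0) (a : ℝ≥0∞) : Prop :=
  if e then a < (r : ℝ≥0∞) else a ≤ (r : ℝ≥0∞)

/-- The ideal `J_{i,a,e}` generated by the pure powers `X_i^r` with `r ≥_e a`. -/
noncomputable def Jsingle (A : Type*) [CommRing A] {d : ℕ} (i : Fin d) (a : ℝ≥0∞)
    (e : Bool) : Ideal (SemiRng A d) :=
  Ideal.span {f | ∃ r : ℝ≥0, geq e r a ∧ f = mono A (Pi.single i r)}

/-- The ideal `J_{a,e}` generated by all pure powers `X_i^r` with `r ≥_{e i} a i`. -/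
noncomputable def Jideal (A : Type*) [CommRing A] {d : ℕ} (a : Fin d → ℝ≥0∞)
    (e : Fin d → Bool) : Ideal (SemiRng A d) :=
  Ideal.span {f | ∃ (i : Fin d) (r : ℝ≥0), geq (e i) r (a i) ∧ f = mono A (Pi.single i r)}

/-- The ideal `I_{a,e}` generated by all monomials `X^r` with `r i ≥_{e i} a i` for all `i`. -/
noncomputable def Iideal (A : Type*) [CommRing A] {d : ℕ} (a : Fin d → ℝ≥0∞)
    (e : Fin d → Bool) : Ideal (SemiRng A d) :=
  Ideal.span {f | ∃ r : Fin d → ℝ≥0, (∀ i, geq (e i) (r i) (a i)) ∧ f = mono A r}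

/-- A monomial ideal is m-irreducible if whenever it is an intersection of two monomial
ideals, it equals one of them. -/
def MIrred {A : Type*} [CommRing A] {d : ℕ} (I : Ideal (SemiRng A d)) : Prop :=
  ∀ J K : Ideal (SemiRng A d), IsMonomialIdeal J → IsMonomialIdeal K →
    I = J ⊓ K → I = J ∨ I = K

variable {A : Type*} [CommRing A] [Nontrivial A] {d : ℕ}

lemma support_mono (r : Fin d → ℝ≥0) : (mono A r).coeff.support = {r} := by
  simpa [mono, AddMonoidAlgebra.coeff_single] using
    Finsupp.support_single_ne_zero r (one_ne_zero (α := A))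

lemma mem_span_mono (E : Set (Fin d → ℝ≥0)) (f : SemiRng A d) :
    f ∈ Ideal.span (mono A '' E) ↔ ∀ r ∈ f.coeff.support, ∃ e ∈ E, ∃ u, r = e + u := by
  classical
  constructor
  · intro hf r hr
    rw [Ideal.span, Submodule.mem_span_set] at hf
    obtain ⟨c, hc, rfl⟩ := hf
    rw [Finsupp.sum, AddMonoidAlgebra.coeff_sum] at hr
    have := Finsupp.support_finset_sum hr
    rw [Finset.mem_biUnion] at this
    obtain ⟨g, hg, hrg⟩ := this
    obtain ⟨e, heE, rfl⟩ := hc hg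
    have h2 : r ∈ (c (mono A e) * mono A e).coeff.support := by
      simpa [smul_eq_mul] using hrg
    have h3 := AddMonoidAlgebra.support_coeff_mul_subset (c (mono A e)) (mono A e) h2
    rw [Finset.mem_add] at h3
    obtain ⟨u, hu, s, hs, hsum⟩ := h3
    have hse : s = e := by
      rw [support_mono, Finset.mem_singleton] at hs
      exact hs
    exact ⟨e, heE, u, by rw [← hsum, hse, add_comm]⟩
  · intro h
    have : f = ∑ r ∈ f.coeff.support, AddMonoidAlgebra.single r (f.coeff r) :=
      (AddMonoidAlgebra.sum_coeff_single f).symm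
    rw [this]
    refine Submodule.sum_mem _ fun r hr => ?_
    obtain ⟨e, heE, u, rfl⟩ := h r hr
    have : (AddMonoidAlgebra.single (e + u) (f.coeff (e + u)) : SemiRng A d)
        = AddMonoidAlgebra.single u (f.coeff (e + u)) * mono A e := by
      rw [mono, AddMonoidAlgebra.single_mul_single, mul_one, add_comm]
    rw [this]
    exact Ideal.mul_mem_left _ _ (Ideal.subset_span ⟨e, heE, rfl⟩)

lemma mono_mem_span_iff (E : Set (Fin d → ℝ≥0)) (r : Fin d → ℝ≥0) :
    mono A r ∈ Ideal.span (mono A '' E) ↔ ∃ e ∈ E, ∃ u, r = e + u := by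
  rw [mem_span_mono, support_mono]
  simp

/-- Membership in `I` is determined by membership of the monomials in the support. -/
def MonDet (I : Ideal (SemiRng A d)) : Prop :=
  ∀ f, f ∈ I ↔ ∀ r ∈ f.coeff.support, mono A r ∈ I

lemma MonDet.of_monomial {I : Ideal (SemiRng A d)} (h : IsMonomialIdeal I) : MonDet I := by
  obtain ⟨E, rfl⟩ := h
  intro f
  rw [mem_span_mono]
  exact forall₂_congr fun r _ => (mono_mem_span_iff E r).symm

lemma MonDet.isMonomial {I : Ideal (SemiRng A d)} (h : MonDet I) : IsMonomialIdeal I := by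
  refine ⟨monSet A I, le_antisymm ?_ ?_⟩
  · intro f hf
    rw [mem_span_mono]
    intro r hr
    exact ⟨r, (h f).mp hf r hr, 0, (add_zero r).symm⟩
  · rw [Ideal.span_le]
    rintro g ⟨e, he, rfl⟩
    exact he

lemma eq_of_monSet {I J : Ideal (SemiRng A d)} (hI : MonDet I) (hJ : MonDet J)
    (h : monSet A I = monSet A J) : I = J := by
  ext f
  rw [hI f, hJ f]
  exact forall₂_congr fun r _ => Set.ext_iff.mp h r

lemma MonDet.iInf {ι : Sort*} {K : ι → Ideal (SemiRng A d)} (h : ∀ i, MonDet (K i)) :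
    MonDet (⨅ i, K i) := by
  intro f
  simp only [Submodule.mem_iInf]
  constructor
  · exact fun hf r hr i => (h i f).mp (hf i) r hr
  · intro hf i
    rw [h i f]
    exact fun r hr => hf r hr i

lemma isMonomial_iSup {ι : Sort*} {K : ι → Ideal (SemiRng A d)}
    (h : ∀ i, IsMonomialIdeal (K i)) : IsMonomialIdeal (⨆ i, K i) := by
  choose E hE using h
  refine ⟨⋃ i, E i, ?_⟩
  rw [Set.image_iUnion, Ideal.span, Submodule.span_iUnion]
  exact iSup_congr fun i => hE i

lemma mono_mem_iSup {ι : Sort*} {K : ι → Ideal (SemiRng A d)}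
    (h : ∀ i, IsMonomialIdeal (K i)) (r : Fin d → ℝ≥0) :
    mono A r ∈ ⨆ i, K i ↔ ∃ i, mono A r ∈ K i := by
  choose E hE using h
  have : (⨆ i, K i) = Ideal.span (mono A '' ⋃ i, E i) := by
    rw [Set.image_iUnion, Ideal.span, Submodule.span_iUnion]
    exact iSup_congr fun i => hE i
  rw [this, mono_mem_span_iff]
  constructor
  · rintro ⟨e, he, u, rfl⟩
    obtain ⟨i, hi⟩ := Set.mem_iUnion.mp he
    exact ⟨i, (hE i ▸ (mono_mem_span_iff (E i) _).mpr ⟨e, hi, u, rfl⟩ : _)⟩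
  · rintro ⟨i, hi⟩
    rw [hE i, mono_mem_span_iff] at hi
    obtain ⟨e, he, u, rfl⟩ := hi
    exact ⟨e, Set.mem_iUnion.mpr ⟨i, he⟩, u, rfl⟩

lemma set_distrib {α : Type*} {l : ℕ} {m : Fin l → ℕ} (S : (t : Fin l) → Fin (m t) → Set α) :
    (⋃ t, ⋂ i, S t i) = ⋂ c : (t : Fin l) → Fin (m t), ⋃ t, S t (c t) := by
  ext x
  simp only [Set.mem_iUnion, Set.mem_iInter]
  constructor
  · rintro ⟨t, ht⟩ c
    exact ⟨t, ht (c t)⟩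
  · intro h
    by_contra hc
    push_neg at hc
    choose i hi using hc
    obtain ⟨t, ht⟩ := h i
    exact hi t ht

theorem stmt8 (l : ℕ) (m : Fin l → ℕ) (hm : ∀ t, 1 ≤ m t)
    (K : (t : Fin l) → Fin (m t) → Ideal (SemiRng A d))
    (hK : ∀ t i, IsMonomialIdeal (K t i)) :
    (⨆ t, ⨅ i, K t i) = ⨅ c : (t : Fin l) → Fin (m t), ⨆ t, K t (c t) := by
  have hKdet : ∀ t i, MonDet (K t i) := fun t i => MonDet.of_monomial (hK t i)
  have hinf : ∀ t, IsMonomialIdeal (⨅ i, K t i) :=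
    fun t => (MonDet.iInf (hKdet t)).isMonomial
  have hL : IsMonomialIdeal (⨆ t, ⨅ i, K t i) := isMonomial_iSup hinf
  have hsup : ∀ c : (t : Fin l) → Fin (m t), IsMonomialIdeal (⨆ t, K t (c t)) :=
    fun c => isMonomial_iSup fun t => hK t (c t)
  have hR : MonDet (⨅ c : (t : Fin l) → Fin (m t), ⨆ t, K t (c t)) :=
    MonDet.iInf fun c => MonDet.of_monomial (hsup c)
  refine eq_of_monSet (MonDet.of_monomial hL) hR ?_
  have key : (⋃ t, ⋂ i, monSet A (K t i)) =
      ⋂ c : (t : Fin l) → Fin (m t), ⋃ t, monSet A (K t (c t)) :=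
    set_distrib _
  ext r
  constructor
  · intro hr
    obtain ⟨t, ht⟩ := (mono_mem_iSup hinf r).mp hr
    have hmem : r ∈ ⋂ c : (t : Fin l) → Fin (m t), ⋃ t, monSet A (K t (c t)) := by
      rw [← key]
      exact Set.mem_iUnion.mpr ⟨t, Set.mem_iInter.mpr fun i => (Submodule.mem_iInf _).mp ht i⟩
    refine (Submodule.mem_iInf _).mpr fun c => ?_
    obtain ⟨t', ht'⟩ := Set.mem_iUnion.mp (Set.mem_iInter.mp hmem c)
    exact (mono_mem_iSup (fun t => hK t (c t)) r).mpr ⟨t', ht'⟩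
  · intro hr
    have hmem : r ∈ ⋃ t, ⋂ i, monSet A (K t i) := by
      rw [key]
      refine Set.mem_iInter.mpr fun c => ?_
      obtain ⟨t, ht⟩ := (mono_mem_iSup (fun t => hK t (c t)) r).mp ((Submodule.mem_iInf _).mp hr c)
      exact Set.mem_iUnion.mpr ⟨t, ht⟩
    obtain ⟨t, ht⟩ := Set.mem_iUnion.mp hmem
    exact (mono_mem_iSup hinf r).mpr
      ⟨t, (Submodule.mem_iInf _).mpr fun i => Set.mem_iInter.mp ht i⟩
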